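/- Let P(z_1,...,z_N) be translation invariant. Let P_der(z^{(a)}, z_{a+1},...,z_N) be the derived polynomial from fusing z_1,...,z_a (the coefficient of λ^{S_a} after substituting z_i = z^{(a)} + λξ_i, assuming it factors as R(ξ)·P_der). Let D_{a,1} be the largest power of (z^{(a)} - z_{a+1}) dividing P_der, and S_{a+1}, S_a the minimal total degrees of P in the first a+1 and a variables respectively. Then D_{a,1} ≥ S_{a+1} - S_a. -/

import Mathlib

open MvPolynomial

noncomputable section

/-- Variable type for the fusion of the first `a` variables: `Sum.inl i` are the
auxiliary variables `ξ i`, `Sum.inr none` is the fused variable (center of mass)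
`z`, and `Sum.inr (some j)` are the untouched variables `z j` for `a ≤ j`. -/
abbrev FVars (N : ℕ) := Fin N ⊕ Option (Fin N)

/-- The auxiliary variables `ξ i` for `i < a`, with the constraint `∑ ξ i = 0`
imposed by eliminating the last one. -/
def fuseXi (N a : ℕ) (i : Fin N) : MvPolynomial (FVars N) ℂ :=
  if i.val + 1 < a then X (Sum.inl i)
  else -(∑ j ∈ Finset.univ.filter (fun j : Fin N => j.val + 1 < a), X (Sum.inl j))

/-- Fusion substitution `z i = z + λ * ξ i` for `i < a`, where `λ` is the
polynomial variable and `z = X (Sum.inr none)`. -/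
def fuse (N a : ℕ) : MvPolynomial (Fin N) ℂ →ₐ[ℂ] Polynomial (MvPolynomial (FVars N) ℂ) :=
  MvPolynomial.aeval (fun i =>
    if i.val < a then Polynomial.C (X (Sum.inr none)) + Polynomial.X * Polynomial.C (fuseXi N a i)
    else Polynomial.C (X (Sum.inr (some i))))

/-- `Qcoeff N a P m` is the coefficient `Q^m` of `λ^m` in the fusion expansion of `P`. -/
def Qcoeff (N a : ℕ) (P : MvPolynomial (Fin N) ℂ) (m : ℕ) : MvPolynomial (FVars N) ℂ :=
  (fuse N a P).coeff m

/-- `minDeg N P a` is `S_a`: the minimal total degree of `P` in `z 1, ..., z a`. -/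
def minDeg (N : ℕ) (P : MvPolynomial (Fin N) ℂ) (a : ℕ) : ℕ :=
  sInf {d | ∃ mo ∈ P.support, d = ∑ i ∈ Finset.univ.filter (fun i : Fin N => i.val < a), mo i}

/-- Translation invariance of a multivariate polynomial. -/
def TransInv (N : ℕ) (P : MvPolynomial (Fin N) ℂ) : Prop :=
  ∀ c : ℂ, MvPolynomial.aeval (fun i : Fin N => X i + MvPolynomial.C c) P = P

/-- Symmetry of a multivariate polynomial. -/
def SymmPoly (N : ℕ) (P : MvPolynomial (Fin N) ℂ) : Prop :=
  ∀ σ : Equiv.Perm (Fin N), rename ⇑σ P = P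

lemma univTI (N : ℕ) (P : MvPolynomial (Fin N) ℂ) (hTI : TransInv N P) :
    MvPolynomial.aeval (fun i => Polynomial.C (X i) + Polynomial.X) P
      = Polynomial.C P := by
  have key : ∀ c : ℂ, Polynomial.eval (MvPolynomial.C c : MvPolynomial (Fin N) ℂ)
      ((MvPolynomial.aeval (fun i => Polynomial.C (X i) + Polynomial.X)) P - Polynomial.C P)
        = 0 := by
    intro c
    have hcom : ∀ r : ℂ, Polynomial.evalRingHom (MvPolynomial.C c : MvPolynomial (Fin N) ℂ)
        (algebraMap ℂ (Polynomial (MvPolynomial (Fin N) ℂ)) r)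
          = algebraMap ℂ (MvPolynomial (Fin N) ℂ) r := by
      intro r
      simp [Polynomial.algebraMap_apply]
    set hom : Polynomial (MvPolynomial (Fin N) ℂ) →ₐ[ℂ] MvPolynomial (Fin N) ℂ :=
      { Polynomial.evalRingHom (MvPolynomial.C c : MvPolynomial (Fin N) ℂ) with
          commutes' := hcom } with hhom
    have h1 : hom ((MvPolynomial.aeval (fun i => Polynomial.C (X i) + Polynomial.X)) P) = P := by
      rw [MvPolynomial.comp_aeval_apply]
      have : (fun i : Fin N => hom (Polynomial.C (X i) + Polynomial.X))
          = fun i : Fin N => (X i + MvPolynomial.C c : MvPolynomial (Fin N) ℂ) := by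
        funext i
        show Polynomial.eval _ _ = _
        simp
      rw [this, hTI c]
    have h2 : hom (Polynomial.C P) = P := by
      show Polynomial.eval _ _ = _
      simp
    have h3 : hom ((MvPolynomial.aeval (fun i => Polynomial.C (X i) + Polynomial.X)) P
        - Polynomial.C P) = 0 := by rw [map_sub, h1, h2, sub_self]
    exact h3
  have hinf : {x : MvPolynomial (Fin N) ℂ |
      Polynomial.IsRoot ((MvPolynomial.aeval (fun i => Polynomial.C (X i) + Polynomial.X)) P
        - Polynomial.C P) x}.Infinite := by
    apply Set.Infinite.mono (s := Set.range (MvPolynomial.C : ℂ → MvPolynomial (Fin N) ℂ))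
    · rintro x ⟨c, rfl⟩
      exact key c
    · exact Set.infinite_range_of_injective (MvPolynomial.C_injective _ _)
  have h0 := Polynomial.eq_zero_of_infinite_isRoot _ hinf
  rw [sub_eq_zero] at h0
  exact h0

lemma shiftInv (N : ℕ) (P : MvPolynomial (Fin N) ℂ) (hTI : TransInv N P)
    {B' : Type} [CommRing B'] [Algebra ℂ B'] (f : Fin N → B') (t : B') :
    MvPolynomial.aeval (fun i => f i + t) P = MvPolynomial.aeval f P := by
  have h := congrArg (Polynomial.aevalTower (MvPolynomial.aeval f : _ →ₐ[ℂ] B') t)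
    (univTI N P hTI)
  rw [MvPolynomial.comp_aeval_apply, Polynomial.aevalTower_C] at h
  rw [← h]
  have : (fun i : Fin N => (Polynomial.aevalTower (MvPolynomial.aeval f : _ →ₐ[ℂ] B') t)
      (Polynomial.C (X i) + Polynomial.X)) = fun i => f i + t := by
    funext i
    simp
  rw [this]

def headF (N a : ℕ) : Finset (Fin N) := Finset.univ.filter (fun i => i.val < a)

def hdeg (N a : ℕ) (mo : Fin N →₀ ℕ) : ℕ := ∑ i ∈ headF N a, mo i

def vmap (N a : ℕ) : Fin N → MvPolynomial (FVars N) ℂ := fun i =>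
  if i.val < a then fuseXi N a i else X (Sum.inr (some i)) - X (Sum.inr none)

def gm (N a : ℕ) (mo : Fin N →₀ ℕ) : MvPolynomial (FVars N) ℂ := ∏ i, vmap N a i ^ mo i

def psiF (N a : ℕ) : Fin N → Polynomial (MvPolynomial (FVars N) ℂ) := fun i =>
  if i.val < a then Polynomial.X * Polynomial.C (fuseXi N a i)
  else Polynomial.C (X (Sum.inr (some i))) - Polynomial.C (X (Sum.inr none))

lemma psi_pow (N a : ℕ) (i : Fin N) (k : ℕ) :
    psiF N a i ^ k
      = Polynomial.X ^ (if i.val < a then k else 0) * Polynomial.C (vmap N a i ^ k) := by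
  unfold psiF vmap
  split_ifs with h
  · rw [mul_pow, map_pow]
  · rw [← map_sub, ← map_pow, pow_zero, one_mul]

lemma psi_monomial (N a : ℕ) (mo : Fin N →₀ ℕ) (c : ℂ) :
    MvPolynomial.aeval (psiF N a) (monomial mo c)
      = Polynomial.X ^ (hdeg N a mo) * Polynomial.C (algebraMap ℂ _ c * gm N a mo) := by
  rw [aeval_monomial]
  rw [Finsupp.prod_fintype _ _ (fun i => pow_zero _)]
  have h1 : ∀ i ∈ Finset.univ, psiF N a i ^ mo i
      = Polynomial.X ^ (if i.val < a then mo i else 0) * Polynomial.C (vmap N a i ^ mo i) :=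
    fun i _ => psi_pow N a i (mo i)
  rw [Finset.prod_congr rfl h1, Finset.prod_mul_distrib,
    Finset.prod_pow_eq_pow_sum, ← map_prod]
  have hsum : ∑ i : Fin N, (if i.val < a then mo i else 0) = hdeg N a mo := by
    rw [hdeg, headF, Finset.sum_filter]
  rw [hsum, Polynomial.algebraMap_apply, gm, map_mul]
  ring

lemma fuse_eq_psi (N a : ℕ) (P : MvPolynomial (Fin N) ℂ) (hTI : TransInv N P) :
    fuse N a P = MvPolynomial.aeval (psiF N a) P := by
  have h := shiftInv N P hTI (psiF N a) (Polynomial.C (X (Sum.inr none)))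
  have he : (fun i : Fin N =>
      if i.val < a then Polynomial.C (X (Sum.inr none)) + Polynomial.X * Polynomial.C (fuseXi N a i)
      else Polynomial.C (X (Sum.inr (some i))))
        = fun i => psiF N a i + Polynomial.C (X (Sum.inr none)) := by
    funext i
    unfold psiF
    split_ifs with hi
    · ring
    · ring
  rw [fuse, he, h]

lemma Qform (N a : ℕ) (P : MvPolynomial (Fin N) ℂ) (hTI : TransInv N P) (m : ℕ) :
    Qcoeff N a P m = ∑ mo ∈ P.support.filter (fun mo => hdeg N a mo = m),
      algebraMap ℂ (MvPolynomial (FVars N) ℂ) (coeff mo P) * gm N a mo := by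
  rw [Qcoeff, fuse_eq_psi N a P hTI]
  conv_lhs => rw [P.as_sum, map_sum, Polynomial.finset_sum_coeff]
  rw [Finset.sum_filter]
  apply Finset.sum_congr rfl
  intro mo _
  rw [psi_monomial, mul_comm (Polynomial.X ^ _), Polynomial.C_mul_X_pow_eq_monomial,
    Polynomial.coeff_monomial]

def EhF (N a : ℕ) (q : MvPolynomial (Fin N) ℂ) : MvPolynomial (Fin N) ℂ :=
  ∑ i ∈ headF N a, pderiv i q

def sigmaP (N a : ℕ) : MvPolynomial (Fin N) ℂ := ∑ i ∈ headF N a, X i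

lemma coeff_pderiv (N : ℕ) (i : Fin N) (q : MvPolynomial (Fin N) ℂ) (ν : Fin N →₀ ℕ) :
    coeff ν (pderiv i q) = ((ν i : ℂ) + 1) * coeff (ν + Finsupp.single i 1) q := by
  induction q using MvPolynomial.induction_on' with
  | monomial u c =>
    rw [pderiv_monomial, coeff_monomial, coeff_monomial]
    by_cases hu : u = ν + Finsupp.single i 1
    · subst hu
      rw [if_pos (add_tsub_cancel_right _ _), if_pos rfl]
      simp only [Finsupp.add_apply, Finsupp.single_apply, if_pos rfl]
      push_cast
      ring
    · rw [if_neg hu, mul_zero]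
      by_cases hz : u i = 0
      · split_ifs with h
        · simp [hz]
        · rfl
      · rw [if_neg]
        intro hc
        apply hu
        rw [← hc, tsub_add_cancel_of_le
          (Finsupp.single_le_iff.mpr (Nat.one_le_iff_ne_zero.mpr hz))]
  | add p q hp hq =>
    rw [map_add, coeff_add, coeff_add, hp, hq]
    ring

lemma pderiv_eq_zero_of_td (N : ℕ) (i : Fin N) (q : MvPolynomial (Fin N) ℂ)
    (h : q.totalDegree = 0) : pderiv i q = 0 := by
  ext ν
  rw [coeff_pderiv, coeff_zero]
  have : coeff (ν + Finsupp.single i 1) q = 0 := by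
    by_contra hc
    have hm := (MvPolynomial.totalDegree_eq_zero_iff _ q).mp h _
      (MvPolynomial.mem_support_iff.mpr hc) i
    simp [Finsupp.add_apply, Finsupp.single_apply] at hm
  rw [this, mul_zero]

lemma td_pderiv (N : ℕ) (n : ℕ) (i : Fin N) (q : MvPolynomial (Fin N) ℂ)
    (h : q.totalDegree ≤ n + 1) : (pderiv i q).totalDegree ≤ n := by
  rw [MvPolynomial.totalDegree]
  apply Finset.sup_le
  intro ν hν
  have hc : coeff ν (pderiv i q) ≠ 0 := MvPolynomial.mem_support_iff.mp hν
  rw [coeff_pderiv] at hc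
  have hc2 : coeff (ν + Finsupp.single i 1) q ≠ 0 := right_ne_zero_of_mul hc
  have hmem := MvPolynomial.le_totalDegree (MvPolynomial.mem_support_iff.mpr hc2)
  have hsum : ((ν + Finsupp.single i 1).sum fun _ e => e) = (ν.sum fun _ e => e) + 1 := by
    rw [Finsupp.sum_add_index' (fun _ => rfl) (fun _ _ _ => rfl),
      Finsupp.sum_single_index rfl]
  omega

lemma td_EhF (N a : ℕ) (n : ℕ) (q : MvPolynomial (Fin N) ℂ)
    (h : q.totalDegree ≤ n + 1) : (EhF N a q).totalDegree ≤ n := by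
  refine le_trans (MvPolynomial.totalDegree_finset_sum _ _) (Finset.sup_le ?_)
  intro i _
  exact td_pderiv N n i q h

lemma EhF_iter (N a : ℕ) : ∀ (n : ℕ) (q : MvPolynomial (Fin N) ℂ),
    q.totalDegree ≤ n → (EhF N a)^[n + 1] q = 0 := by
  intro n
  induction n with
  | zero =>
    intro q hq
    rw [Function.iterate_one, EhF]
    apply Finset.sum_eq_zero
    intro i _
    exact pderiv_eq_zero_of_td N i q (Nat.le_zero.mp hq)
  | succ n ih =>
    intro q hq
    rw [Function.iterate_succ_apply]
    exact ih _ (td_EhF N a n q hq)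

lemma EhF_add (N a : ℕ) (p q : MvPolynomial (Fin N) ℂ) :
    EhF N a (p + q) = EhF N a p + EhF N a q := by
  unfold EhF
  rw [← Finset.sum_add_distrib]
  exact Finset.sum_congr rfl fun i _ => map_add _ _ _

lemma EhF_mul (N a : ℕ) (p q : MvPolynomial (Fin N) ℂ) :
    EhF N a (p * q) = EhF N a p * q + p * EhF N a q := by
  unfold EhF
  rw [Finset.sum_mul, Finset.mul_sum, ← Finset.sum_add_distrib]
  exact Finset.sum_congr rfl fun i _ => pderiv_mul

lemma EhF_C (N a : ℕ) (c : ℂ) : EhF N a (C c) = 0 :=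
  Finset.sum_eq_zero fun i _ => pderiv_C

lemma EhF_neg (N a : ℕ) (p : MvPolynomial (Fin N) ℂ) : EhF N a (-p) = -EhF N a p := by
  unfold EhF
  rw [← Finset.sum_neg_distrib]
  exact Finset.sum_congr rfl fun i _ => map_neg _ _

lemma card_headF (N a : ℕ) (h : a ≤ N) : (headF N a).card = a := by
  have : headF N a = Finset.image (Fin.castLE h) Finset.univ := by
    ext x
    simp only [headF, Finset.mem_filter, Finset.mem_univ, true_and, Finset.mem_image]
    constructor
    · intro hx
      exact ⟨⟨x.val, hx⟩, rfl⟩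
    · rintro ⟨y, rfl⟩
      exact y.isLt
  rw [this, Finset.card_image_of_injective _ (Fin.castLE_injective h), Finset.card_univ,
    Fintype.card_fin]

lemma EhF_sigma (N a : ℕ) (h : a ≤ N) : EhF N a (sigmaP N a) = C (a : ℂ) := by
  unfold EhF sigmaP
  have : ∀ i ∈ headF N a, pderiv i (∑ j ∈ headF N a, X j) = (1 : MvPolynomial (Fin N) ℂ) := by
    intro i hi
    rw [map_sum, Finset.sum_eq_single i (fun j _ hji => pderiv_X_of_ne hji) (fun hni => (hni hi).elim),
      pderiv_X_self]
  rw [Finset.sum_congr rfl this, Finset.sum_const, card_headF N a h, nsmul_eq_mul, mul_one]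
  exact (MvPolynomial.C_eq_coe_nat a).symm

lemma euler_contradiction (N a : ℕ) (ha : 1 ≤ a) (haN : a ≤ N) (W : MvPolynomial (Fin N) ℂ)
    (hW : W ≠ 0) (hE : EhF N a W = 0) (hdvd : sigmaP N a ∣ W) : False := by
  obtain ⟨G, rfl⟩ := hdvd
  have hG : G ≠ 0 := fun h => hW (by rw [h, mul_zero])
  set u : ℕ → MvPolynomial (Fin N) ℂ := fun j => (EhF N a)^[j] G with hu
  have hswap : ∀ j, EhF N a (u j) = u (j + 1) := by
    intro j
    rw [hu]
    simp only []
    rw [← Function.iterate_succ_apply' (EhF N a) j G]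
  have claim1 : ∀ j : ℕ, C (((j + 1) * a : ℕ) : ℂ) * u j = -(sigmaP N a * u (j + 1)) := by
    intro j
    induction j with
    | zero =>
      have h0 : EhF N a (sigmaP N a * G) = C (a : ℂ) * G + sigmaP N a * EhF N a G := by
        rw [EhF_mul, EhF_sigma N a haN]
      rw [hE] at h0
      have : C (a : ℂ) * G = -(sigmaP N a * EhF N a G) := by linear_combination -h0
      rw [← hswap 0]
      simpa [hu] using this
    | succ j ih =>
      have happ := congrArg (EhF N a) ih
      rw [EhF_mul, EhF_C, EhF_neg, EhF_mul, EhF_sigma N a haN, hswap, hswap] at happ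
      have : (C (((j + 1 + 1) * a : ℕ) : ℂ) : MvPolynomial (Fin N) ℂ)
          = C (((j + 1) * a : ℕ) : ℂ) + C ((a : ℕ) : ℂ) := by
        rw [← map_add]
        congr 1
        push_cast
        ring
      rw [this]
      linear_combination happ
  have claim2 : ∀ j : ℕ, ∃ c : ℂ, c ≠ 0 ∧ C c * G = sigmaP N a ^ j * u j := by
    intro j
    induction j with
    | zero =>
      exact ⟨1, one_ne_zero, by simp [hu]⟩
    | succ j ih =>
      obtain ⟨c, hc, hcg⟩ := ih
      refine ⟨-(((j + 1) * a : ℕ) : ℂ) * c, ?_, ?_⟩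
      · apply mul_ne_zero _ hc
        simp only [neg_ne_zero, Ne, Nat.cast_eq_zero]
        positivity
      · have h1 := claim1 j
        have : C (-(((j + 1) * a : ℕ) : ℂ) * c) * G
            = C (-(((j + 1) * a : ℕ) : ℂ)) * (C c * G) := by
          rw [map_mul]; ring
        rw [this, hcg]
        rw [map_neg]
        rw [pow_succ]
        linear_combination (-(sigmaP N a ^ j)) * h1
  obtain ⟨c, hc, hcg⟩ := claim2 (G.totalDegree + 1)
  have : u (G.totalDegree + 1) = 0 := EhF_iter N a G.totalDegree G le_rfl
  rw [this, mul_zero] at hcg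
  rcases mul_eq_zero.mp hcg with h | h
  · exact hc (by simpa using (MvPolynomial.C_injective _ ℂ) (h.trans (map_zero _).symm))
  · exact hG h

def betaF (N : ℕ) : FVars N → MvPolynomial (FVars N) ℂ
  | Sum.inl i => X (Sum.inl i)
  | Sum.inr none => X (Sum.inr none)
  | Sum.inr (some j) => X (Sum.inr (some j)) - X (Sum.inr none)

def betaInvF (N : ℕ) : FVars N → MvPolynomial (FVars N) ℂ
  | Sum.inl i => X (Sum.inl i)
  | Sum.inr none => X (Sum.inr none)
  | Sum.inr (some j) => X (Sum.inr (some j)) + X (Sum.inr none)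

lemma beta_retract (N : ℕ) (x : MvPolynomial (FVars N) ℂ) :
    MvPolynomial.aeval (betaInvF N) (MvPolynomial.aeval (betaF N) x) = x := by
  have : (MvPolynomial.aeval (betaInvF N)).comp (MvPolynomial.aeval (betaF N))
      = AlgHom.id ℂ (MvPolynomial (FVars N) ℂ) := by
    apply MvPolynomial.algHom_ext
    rintro (i | _ | j)
    · simp [betaF, betaInvF]
    · simp [betaF, betaInvF]
    · simp [betaF, betaInvF]
  calc MvPolynomial.aeval (betaInvF N) (MvPolynomial.aeval (betaF N) x)
      = ((MvPolynomial.aeval (betaInvF N)).comp (MvPolynomial.aeval (betaF N))) x := rfl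
    _ = x := by rw [this]; rfl

def psiN (N a : ℕ) : Fin N → MvPolynomial (FVars N) ℂ := fun i =>
  if i.val < a then fuseXi N a i else X (Sum.inr (some i))

lemma phi_eq_beta_psi (N a : ℕ) (W : MvPolynomial (Fin N) ℂ) :
    MvPolynomial.aeval (vmap N a) W
      = MvPolynomial.aeval (betaF N) (MvPolynomial.aeval (psiN N a) W) := by
  have : (MvPolynomial.aeval (betaF N)).comp (MvPolynomial.aeval (psiN N a))
      = (MvPolynomial.aeval (vmap N a) :
          MvPolynomial (Fin N) ℂ →ₐ[ℂ] MvPolynomial (FVars N) ℂ) := by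
    apply MvPolynomial.algHom_ext
    intro i
    simp only [AlgHom.comp_apply, aeval_X, psiN, vmap]
    split_ifs with h
    · unfold fuseXi
      split_ifs with h2
      · simp [betaF]
      · rw [map_neg, map_sum]
        congr 1
        apply Finset.sum_congr rfl
        intro j _
        simp [betaF]
    · simp [betaF]
  rw [← this]
  rfl

def sprime (N a : ℕ) : MvPolynomial (Fin N) ℂ :=
  ∑ j ∈ Finset.univ.filter (fun j : Fin N => j.val + 1 < a), X j

def tauP (N a : ℕ) : MvPolynomial (Fin N) ℂ →ₐ[ℂ] MvPolynomial (Fin N) ℂ :=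
  MvPolynomial.aeval (fun i => if i.val + 1 = a then X i - sprime N a else X i)

def tauM (N a : ℕ) : MvPolynomial (Fin N) ℂ →ₐ[ℂ] MvPolynomial (Fin N) ℂ :=
  MvPolynomial.aeval (fun i => if i.val + 1 = a then X i + sprime N a else X i)

lemma tau_sprime_P (N a : ℕ) : tauP N a (sprime N a) = sprime N a := by
  unfold sprime
  rw [map_sum]
  apply Finset.sum_congr rfl
  intro j hj
  simp only [Finset.mem_filter] at hj
  rw [tauP, aeval_X, if_neg (by omega)]

lemma tau_sprime_M (N a : ℕ) : tauM N a (sprime N a) = sprime N a := by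
  unfold sprime
  rw [map_sum]
  apply Finset.sum_congr rfl
  intro j hj
  simp only [Finset.mem_filter] at hj
  rw [tauM, aeval_X, if_neg (by omega)]

lemma tau_retract (N a : ℕ) (x : MvPolynomial (Fin N) ℂ) :
    tauM N a (tauP N a x) = x := by
  have : (tauM N a).comp (tauP N a) = AlgHom.id ℂ (MvPolynomial (Fin N) ℂ) := by
    apply MvPolynomial.algHom_ext
    intro i
    simp only [AlgHom.comp_apply, AlgHom.id_apply, tauP, aeval_X]
    split_ifs with h
    · rw [map_sub]
      have h2 : tauM N a (X i) = X i + sprime N a := by rw [tauM, aeval_X, if_pos h]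
      rw [h2, tau_sprime_M]
      ring
    · rw [tauM, aeval_X, if_neg h]
  calc tauM N a (tauP N a x) = ((tauM N a).comp (tauP N a)) x := rfl
    _ = x := by rw [this]; rfl

def ev0 (N a : ℕ) : MvPolynomial (Fin N) ℂ →ₐ[ℂ] MvPolynomial (Fin N) ℂ :=
  MvPolynomial.aeval (fun i => if i.val + 1 = a then 0 else X i)

def hmap (N a : ℕ) : Fin N → FVars N := fun i =>
  if i.val < a then Sum.inl i else Sum.inr (some i)

lemma hmap_inj (N a : ℕ) : Function.Injective (hmap N a) := by
  intro x y hxy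
  unfold hmap at hxy
  split_ifs at hxy with h1 h2 h2 <;> simp_all

lemma psi_tauM (N a : ℕ) (ha : 1 ≤ a) (x : MvPolynomial (Fin N) ℂ) :
    MvPolynomial.aeval (psiN N a) (tauM N a x) = rename (hmap N a) (ev0 N a x) := by
  have : (MvPolynomial.aeval (psiN N a)).comp (tauM N a)
      = (rename (hmap N a)).comp (ev0 N a) := by
    apply MvPolynomial.algHom_ext
    intro i
    simp only [AlgHom.comp_apply, tauM, ev0, aeval_X]
    split_ifs with h
    · -- i.val + 1 = a
      rw [map_add, aeval_X, map_zero]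
      have h1 : psiN N a i = -(∑ j ∈ Finset.univ.filter (fun j : Fin N => j.val + 1 < a),
          X (Sum.inl j) : MvPolynomial (FVars N) ℂ) := by
        rw [psiN, if_pos (by omega), fuseXi, if_neg (by omega)]
      have h2 : MvPolynomial.aeval (psiN N a) (sprime N a)
          = ∑ j ∈ Finset.univ.filter (fun j : Fin N => j.val + 1 < a), X (Sum.inl j) := by
        rw [sprime, map_sum]
        apply Finset.sum_congr rfl
        intro j hj
        simp only [Finset.mem_filter] at hj
        rw [aeval_X, psiN, if_pos (by omega), fuseXi, if_pos hj.2]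
      rw [h1, h2]
      ring
    · rw [aeval_X, rename_X, psiN, hmap]
      split_ifs with h3
      · rw [fuseXi, if_pos (by omega)]
      · rfl
  calc MvPolynomial.aeval (psiN N a) (tauM N a x)
      = ((MvPolynomial.aeval (psiN N a)).comp (tauM N a)) x := rfl
    _ = _ := by rw [this]; rfl

lemma ev_monomial_zero (N : ℕ) (w : Fin N) (mo : Fin N →₀ ℕ) (c : ℂ) (h : mo w = 0) :
    MvPolynomial.aeval (fun i => if i = w then 0 else X i) (monomial mo c) = monomial mo c := by
  rw [aeval_monomial]
  have : (mo.prod fun i k => (if i = w then (0 : MvPolynomial (Fin N) ℂ) else X i) ^ k)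
      = mo.prod fun i k => X i ^ k := by
    apply Finsupp.prod_congr
    intro i hi
    have : i ≠ w := fun he => by
      subst he
      exact (Finsupp.mem_support_iff.mp hi) h
    rw [if_neg this]
  rw [this, ← aeval_monomial, aeval_X_left_apply]

lemma ev_monomial_ne (N : ℕ) (w : Fin N) (mo : Fin N →₀ ℕ) (c : ℂ) (h : mo w ≠ 0) :
    MvPolynomial.aeval (fun i => if i = w then 0 else X i : Fin N → MvPolynomial (Fin N) ℂ)
      (monomial mo c) = 0 := by
  rw [aeval_monomial, Finsupp.prod]
  have hw : w ∈ mo.support := Finsupp.mem_support_iff.mpr h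
  rw [Finset.prod_eq_zero hw (by rw [if_pos rfl, zero_pow h]), mul_zero]

lemma X_dvd_of_ev_zero (N : ℕ) (w : Fin N) (r : MvPolynomial (Fin N) ℂ)
    (h : MvPolynomial.aeval (fun i => if i = w then 0 else X i : Fin N → MvPolynomial (Fin N) ℂ)
      r = 0) : X w ∣ r := by
  have hcz : ∀ mo : Fin N →₀ ℕ, mo w = 0 → coeff mo r = 0 := by
    intro mo hmo
    have hr : MvPolynomial.aeval (fun i => if i = w then 0 else X i) r
        = ∑ mo' ∈ r.support.filter (fun mo' => mo' w = 0), monomial mo' (coeff mo' r) := by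
      conv_lhs => rw [r.as_sum, map_sum]
      rw [Finset.sum_filter]
      apply Finset.sum_congr rfl
      intro mo' _
      by_cases h' : mo' w = 0
      · rw [if_pos h', ev_monomial_zero N w mo' _ h']
      · rw [if_neg h', ev_monomial_ne N w mo' _ h']
    rw [h] at hr
    by_cases hms : mo ∈ r.support
    · have := congrArg (coeff mo) hr.symm
      rw [coeff_zero, MvPolynomial.coeff_sum] at this
      rw [Finset.sum_eq_single_of_mem mo (Finset.mem_filter.mpr ⟨hms, hmo⟩)
        (fun b _ hb => by rw [coeff_monomial, if_neg hb]), coeff_monomial, if_pos rfl] at this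
      exact this
    · exact MvPolynomial.notMem_support_iff.mp hms
  have : r = ∑ mo ∈ r.support, monomial mo (coeff mo r) := r.as_sum
  rw [this]
  apply Finset.dvd_sum
  intro mo hmo
  have hw : mo w ≠ 0 := fun h0 => (MvPolynomial.mem_support_iff.mp hmo) (hcz mo h0)
  refine ⟨monomial (mo - Finsupp.single w 1) (coeff mo r), ?_⟩
  have hmo_eq : Finsupp.single w 1 + (mo - Finsupp.single w 1) = mo := by
    rw [add_comm]
    exact tsub_add_cancel_of_le (Finsupp.single_le_iff.mpr (Nat.one_le_iff_ne_zero.mpr hw))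
  rw [MvPolynomial.X, MvPolynomial.monomial_mul, one_mul, hmo_eq]

lemma sigma_split (N a : ℕ) (ha : 1 ≤ a) (haN : a ≤ N) :
    sigmaP N a = X (⟨a - 1, by omega⟩ : Fin N) + sprime N a := by
  unfold sigmaP sprime headF
  have hset : (Finset.univ.filter (fun i : Fin N => i.val < a))
      = insert (⟨a - 1, by omega⟩ : Fin N)
        (Finset.univ.filter (fun j : Fin N => j.val + 1 < a)) := by
    ext x
    simp only [Finset.mem_filter, Finset.mem_univ, true_and, Finset.mem_insert, Fin.ext_iff]
    omega
  rw [hset, Finset.sum_insert (by simp only [Finset.mem_filter, Finset.mem_univ, true_and]; omega)]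

lemma Phi_ne_zero (N a : ℕ) (haN : a ≤ N) (W : MvPolynomial (Fin N) ℂ) (hW : W ≠ 0)
    (hE : EhF N a W = 0) : MvPolynomial.aeval (vmap N a) W ≠ 0 := by
  intro h0
  rw [phi_eq_beta_psi] at h0
  have hpsi : MvPolynomial.aeval (psiN N a) W = 0 := by
    have hh := congrArg (MvPolynomial.aeval (betaInvF N)) h0
    rwa [beta_retract, map_zero] at hh
  rcases Nat.eq_zero_or_pos a with haz | ha
  · subst haz
    have hre : rename (hmap N 0) W = MvPolynomial.aeval (psiN N 0) W := by
      have hfe : (MvPolynomial.X ∘ hmap N 0 : Fin N → MvPolynomial (FVars N) ℂ) = psiN N 0 := by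
        funext i
        simp [psiN, hmap]
      rw [rename_eq_aeval]
      rw [hfe]
    apply hW
    apply rename_injective (hmap N 0) (hmap_inj N 0)
    rw [hre, hpsi, map_zero]
  · set ia : Fin N := ⟨a - 1, by omega⟩ with hia_def
    have hia : (ia : Fin N).val + 1 = a := by
      show a - 1 + 1 = a
      omega
    have h1 : MvPolynomial.aeval (psiN N a) (tauM N a (tauP N a W)) = 0 := by
      rw [tau_retract]
      exact hpsi
    rw [psi_tauM N a ha] at h1
    have h2 : ev0 N a (tauP N a W) = 0 := by
      apply rename_injective (hmap N a) (hmap_inj N a)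
      rw [h1, map_zero]
    have h3 : MvPolynomial.aeval
        (fun i => if i = ia then 0 else X i : Fin N → MvPolynomial (Fin N) ℂ)
          (tauP N a W) = 0 := by
      have hfe : (fun i : Fin N => if i.val + 1 = a then (0 : MvPolynomial (Fin N) ℂ) else X i)
          = (fun i => if i = ia then 0 else X i) := by
        funext i
        by_cases hc : i.val + 1 = a
        · rw [if_pos hc, if_pos (by simp only [Fin.ext_iff]; omega)]
        · rw [if_neg hc, if_neg (by simp only [Fin.ext_iff]; omega)]
      rw [← hfe]
      exact h2
    have h4 : X ia ∣ tauP N a W := X_dvd_of_ev_zero N ia _ h3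
    obtain ⟨g, hg⟩ := h4
    have h5 : sigmaP N a ∣ W := by
      refine ⟨tauM N a g, ?_⟩
      conv_lhs => rw [← tau_retract N a W]
      rw [hg, map_mul]
      have hXia : tauM N a (X ia) = X ia + sprime N a := by
        rw [tauM, aeval_X, if_pos hia]
      rw [hXia, sigma_split N a ha haN]
    exact euler_contradiction N a ha haN W hW hE h5

lemma order_le (N a : ℕ) (haN : a < N) (R Pder Q : MvPolynomial (FVars N) ℂ)
    (hR : ∀ v ∈ R.vars, ∃ i, v = Sum.inl i) (hRne : R ≠ 0)
    (hfac : Q = R * Pder) (D : ℕ)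
    (hnd : ¬ (X (Sum.inr none) - X (Sum.inr (some ⟨a, haN⟩)) :
        MvPolynomial (FVars N) ℂ) ^ (D + 1) ∣ Pder)
    (hdvd : (X (Sum.inr none) - X (Sum.inr (some ⟨a, haN⟩)) :
        MvPolynomial (FVars N) ℂ) ^ (D + 1) ∣ Q) : False := by
  set sv : FVars N := Sum.inr (some ⟨a, haN⟩) with hsv
  set p : MvPolynomial (FVars N) ℂ := X (Sum.inr none) - X sv with hp
  set w : FVars N → Polynomial (MvPolynomial (FVars N) ℂ) := fun v =>
    if v = sv then Polynomial.C (X (Sum.inr none)) - Polynomial.X else Polynomial.C (X v)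
    with hw
  set θ : MvPolynomial (FVars N) ℂ →ₐ[ℂ] Polynomial (MvPolynomial (FVars N) ℂ) :=
    MvPolynomial.aeval w with hθ
  have hθp : θ p = Polynomial.X := by
    rw [hp, map_sub, aeval_X, aeval_X, hw]
    simp only [reduceCtorEq, if_neg, if_pos]
    rw [if_neg (show ¬((Sum.inr none : FVars N) = sv) by rw [hsv]; simp)]
    ring
  have hθR : θ R = Polynomial.C R := by
    conv_lhs => rw [R.as_sum, map_sum]
    conv_rhs => rw [R.as_sum, map_sum]
    apply Finset.sum_congr rfl
    intro mo hmo
    rw [aeval_monomial]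
    have hprod : (mo.prod fun v k => w v ^ k)
        = Polynomial.C (mo.prod fun v k => X v ^ k) := by
      rw [Finsupp.prod, Finsupp.prod, map_prod]
      apply Finset.prod_congr rfl
      intro v hv
      have hvars : v ∈ R.vars := (MvPolynomial.mem_vars v).mpr ⟨mo, hmo, hv⟩
      obtain ⟨i, rfl⟩ := hR v hvars
      rw [map_pow]
      simp [hw, hsv]
    rw [hprod, Polynomial.algebraMap_apply, ← map_mul]
    congr 1
    have := aeval_monomial (X : FVars N → MvPolynomial (FVars N) ℂ) mo (coeff mo R)
    rw [aeval_X_left_apply] at this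
    rw [← this]
  have hXdvd : Polynomial.X ^ (D + 1) ∣ Polynomial.C R * θ Pder := by
    have := map_dvd θ hdvd
    rw [map_pow, hθp, hfac, map_mul, hθR] at this
    exact this
  have hXPder : Polynomial.X ^ (D + 1) ∣ θ Pder := by
    rw [Polynomial.X_pow_dvd_iff]
    intro d hd
    have h0 := Polynomial.X_pow_dvd_iff.mp hXdvd d hd
    rw [Polynomial.coeff_C_mul] at h0
    rcases mul_eq_zero.mp h0 with h | h
    · exact absurd h hRne
    · exact h
  obtain ⟨u, hu⟩ := hXPder
  have hcomm : ∀ r : ℂ, Polynomial.evalRingHom p (algebraMap ℂ _ r)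
      = algebraMap ℂ (MvPolynomial (FVars N) ℂ) r := by
    intro r
    simp [Polynomial.algebraMap_apply]
  set ρ : Polynomial (MvPolynomial (FVars N) ℂ) →ₐ[ℂ] MvPolynomial (FVars N) ℂ :=
    { Polynomial.evalRingHom p with commutes' := hcomm } with hρ
  have hretr : ∀ x : MvPolynomial (FVars N) ℂ, ρ (θ x) = x := by
    intro x
    have hcomp : ρ.comp θ = AlgHom.id ℂ (MvPolynomial (FVars N) ℂ) := by
      apply MvPolynomial.algHom_ext
      intro v
      simp only [AlgHom.comp_apply, AlgHom.id_apply, hθ, aeval_X, hw]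
      by_cases hveq : v = sv
      · rw [if_pos hveq, hveq]
        show Polynomial.eval p _ = _
        rw [Polynomial.eval_sub, Polynomial.eval_C, Polynomial.eval_X, hp]
        ring
      · rw [if_neg hveq]
        show Polynomial.eval p _ = _
        rw [Polynomial.eval_C]
    calc ρ (θ x) = (ρ.comp θ) x := rfl
      _ = x := by rw [hcomp]; rfl
  apply hnd
  refine ⟨ρ u, ?_⟩
  have := congrArg ρ hu
  rw [hretr, map_mul, map_pow] at this
  have hρX : ρ Polynomial.X = p := by
    show Polynomial.eval p Polynomial.X = p
    rw [Polynomial.eval_X]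
  rw [hρX] at this
  exact this

def Gm (N : ℕ) : MvPolynomial (Fin N) ℂ →ₐ[ℂ] Polynomial (MvPolynomial (Fin N) ℂ) :=
  MvPolynomial.aeval (fun i => Polynomial.C (X i) + Polynomial.X)

lemma coeff_zero_G (N : ℕ) (q : MvPolynomial (Fin N) ℂ) : (Gm N q).coeff 0 = q := by
  induction q using MvPolynomial.induction_on with
  | C c =>
    rw [Gm, aeval_C]
    simp [Polynomial.algebraMap_apply, MvPolynomial.algebraMap_eq]
  | add p q hp hq => rw [map_add, Polynomial.coeff_add, hp, hq]
  | mul_X p i hp =>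
    rw [map_mul, Gm, aeval_X, ← Gm, mul_add, Polynomial.coeff_add, Polynomial.coeff_mul_C,
      Polynomial.coeff_mul_X_zero, hp, add_zero]

lemma coeff_one_G (N : ℕ) (q : MvPolynomial (Fin N) ℂ) :
    (Gm N q).coeff 1 = ∑ i : Fin N, pderiv i q := by
  induction q using MvPolynomial.induction_on with
  | C c =>
    rw [Gm, aeval_C]
    have h3 : ∀ i : Fin N, pderiv i (C c : MvPolynomial (Fin N) ℂ) = 0 := fun i => pderiv_C
    rw [Finset.sum_congr rfl (fun i _ => h3 i), Finset.sum_const, smul_zero]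
    simp [Polynomial.algebraMap_apply, MvPolynomial.algebraMap_eq]
  | add p q hp hq =>
    rw [map_add, Polynomial.coeff_add, hp, hq, ← Finset.sum_add_distrib]
    exact Finset.sum_congr rfl fun i _ => (map_add _ _ _).symm
  | mul_X p i hp =>
    rw [map_mul, Gm, aeval_X, ← Gm, mul_add, Polynomial.coeff_add, Polynomial.coeff_mul_C]
    have h1 : (Gm N p * Polynomial.X).coeff 1 = (Gm N p).coeff 0 := Polynomial.coeff_mul_X _ 0
    rw [h1, coeff_zero_G, hp]
    have h2 : ∀ j : Fin N, pderiv j (p * X i) = pderiv j p * X i + p * pderiv j (X i) :=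
      fun j => pderiv_mul
    rw [Finset.sum_congr rfl (fun j _ => h2 j), Finset.sum_add_distrib, ← Finset.sum_mul,
      ← Finset.mul_sum]
    congr 1
    rw [Finset.sum_eq_single i (fun j _ hji => by rw [pderiv_X_of_ne (Ne.symm hji)])
      (fun hni => (hni (Finset.mem_univ i)).elim), pderiv_X_self, mul_one]

lemma EP0 (N : ℕ) (P : MvPolynomial (Fin N) ℂ) (hTI : TransInv N P) :
    ∑ i : Fin N, pderiv i P = 0 := by
  have h := congrArg (fun q => Polynomial.coeff q 1) (univTI N P hTI)
  have h' : (Gm N P).coeff 1 = (Polynomial.C P).coeff 1 := h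
  rw [coeff_one_G, Polynomial.coeff_C] at h'
  simpa using h'

lemma hdeg_add_single (N a : ℕ) (ν : Fin N →₀ ℕ) (i : Fin N) :
    hdeg N a (ν + Finsupp.single i 1) = hdeg N a ν + (if i ∈ headF N a then 1 else 0) := by
  unfold hdeg
  have h1 : ∀ j ∈ headF N a, (ν + Finsupp.single i 1 : Fin N →₀ ℕ) j
      = ν j + (Finsupp.single i 1 : Fin N →₀ ℕ) j := fun j _ => rfl
  rw [Finset.sum_congr rfl h1, Finset.sum_add_distrib]
  congr 1
  have h2 : ∀ j ∈ headF N a, Finsupp.single i 1 j = if i = j then 1 else 0 :=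
    fun j _ => Finsupp.single_apply
  rw [Finset.sum_congr rfl h2, Finset.sum_ite_eq]

lemma hdeg_succ (N a : ℕ) (haN : a < N) (mo : Fin N →₀ ℕ) :
    hdeg N (a + 1) mo = hdeg N a mo + mo ⟨a, haN⟩ := by
  unfold hdeg headF
  have hset : Finset.univ.filter (fun i : Fin N => i.val < a + 1)
      = insert (⟨a, haN⟩ : Fin N) (Finset.univ.filter (fun i : Fin N => i.val < a)) := by
    ext x
    simp only [Finset.mem_filter, Finset.mem_univ, true_and, Finset.mem_insert, Fin.ext_iff]
    omega
  rw [hset, Finset.sum_insert (by simp)]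
  omega

/-- `D_{a,1} ≥ S_{a+1} - S_a` for a translation invariant polynomial
with a derived polynomial for the fusion of the first `a` variables. -/
theorem stmt9 (N a : ℕ) (haN : a < N) (P : MvPolynomial (Fin N) ℂ)
    (hTI : TransInv N P)
    (R Pder : MvPolynomial (FVars N) ℂ)
    (hR : ∀ v ∈ R.vars, ∃ i, v = Sum.inl i)
    (hPd : ∀ v ∈ Pder.vars, ∃ o, v = Sum.inr o)
    (hfac : Qcoeff N a P (minDeg N P a) = R * Pder)
    (D : ℕ)
    (hD : (X (Sum.inr none) - X (Sum.inr (some ⟨a, haN⟩)) : MvPolynomial (FVars N) ℂ) ^ D ∣ Pder ∧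
      ¬ (X (Sum.inr none) - X (Sum.inr (some ⟨a, haN⟩)) : MvPolynomial (FVars N) ℂ) ^ (D + 1) ∣ Pder) :
    minDeg N P (a + 1) ≤ D + minDeg N P a := by
  by_cases hP : P = 0
  · subst hP
    have h0 : minDeg N 0 (a + 1) = 0 := by
      unfold minDeg
      convert Nat.sInf_empty
      rw [Set.eq_empty_iff_forall_notMem]
      rintro d ⟨mo, hmo, -⟩
      simp at hmo
    rw [h0]
    exact Nat.zero_le _
  · set S := minDeg N P a with hS
    have hminDeg_eq : ∀ b : ℕ, minDeg N P b = sInf {d | ∃ mo ∈ P.support, d = hdeg N b mo} := by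
      intro b
      rfl
    have hsetne : {d | ∃ mo ∈ P.support, d = hdeg N a mo}.Nonempty := by
      obtain ⟨mo, hmo⟩ := MvPolynomial.ne_zero_iff.mp hP
      exact ⟨hdeg N a mo, mo, MvPolynomial.mem_support_iff.mpr hmo, rfl⟩
    have hmem : S ∈ {d | ∃ mo ∈ P.support, d = hdeg N a mo} := by
      rw [hS, hminDeg_eq a]
      exact Nat.sInf_mem hsetne
    obtain ⟨mo₀, hmo₀, hmo₀S⟩ := hmem
    have minLe : ∀ mo ∈ P.support, S ≤ hdeg N a mo := by
      intro mo hmo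
      rw [hS, hminDeg_eq a]
      exact Nat.sInf_le ⟨mo, hmo, rfl⟩
    by_contra hcon
    set T := P.support.filter (fun mo => hdeg N a mo = S) with hT
    set PS : MvPolynomial (Fin N) ℂ := ∑ mo ∈ T, monomial mo (coeff mo P) with hPS
    have coeff_PS : ∀ ν, coeff ν PS = if hdeg N a ν = S then coeff ν P else 0 := by
      intro ν
      rw [hPS, MvPolynomial.coeff_sum]
      by_cases hν : ν ∈ T
      · rw [Finset.sum_eq_single_of_mem ν hν
          (fun mo _ hne => by rw [coeff_monomial, if_neg hne]),
          coeff_monomial, if_pos rfl, if_pos (Finset.mem_filter.mp hν).2]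
      · rw [Finset.sum_eq_zero (fun mo hmo => by
          rw [coeff_monomial, if_neg (show ¬ mo = ν from fun he => hν (he ▸ hmo))])]
        split_ifs with hcond
        · by_cases hsup : ν ∈ P.support
          · exact absurd (Finset.mem_filter.mpr ⟨hsup, hcond⟩) hν
          · exact (MvPolynomial.notMem_support_iff.mp hsup).symm
        · rfl
    have hPSne : PS ≠ 0 := by
      intro h0
      have hc := coeff_PS mo₀
      rw [h0, coeff_zero, if_pos hmo₀S.symm] at hc
      exact (MvPolynomial.mem_support_iff.mp hmo₀) hc.symm
    have coeffE : ∀ ν : Fin N →₀ ℕ,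
        ∑ i : Fin N, ((ν i : ℂ) + 1) * coeff (ν + Finsupp.single i 1) P = 0 := by
      intro ν
      have h := congrArg (coeff ν) (EP0 N P hTI)
      rw [MvPolynomial.coeff_sum, coeff_zero] at h
      rw [← h]
      exact Finset.sum_congr rfl fun i _ => (coeff_pderiv N i P ν).symm
    have hEhPS : EhF N a PS = 0 := by
      apply MvPolynomial.ext
      intro ν
      rw [coeff_zero, EhF, MvPolynomial.coeff_sum,
        Finset.sum_congr rfl (fun i _ => coeff_pderiv N i PS ν)]
      by_cases hc : hdeg N a ν + 1 = S
      · have hterm : ∀ i ∈ headF N a, ((ν i : ℂ) + 1) * coeff (ν + Finsupp.single i 1) PS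
            = ((ν i : ℂ) + 1) * coeff (ν + Finsupp.single i 1) P := by
          intro i hi
          rw [coeff_PS, hdeg_add_single, if_pos hi, if_pos hc]
        rw [Finset.sum_congr rfl hterm]
        have hz : ∀ i ∈ Finset.univ.filter (fun i : Fin N => ¬ i.val < a),
            ((ν i : ℂ) + 1) * coeff (ν + Finsupp.single i 1) P = 0 := by
          intro i hi
          simp only [Finset.mem_filter, Finset.mem_univ, true_and] at hi
          have hnot : i ∉ headF N a := by
            simp only [headF, Finset.mem_filter, Finset.mem_univ, true_and]
            exact hi
          have hdeq : hdeg N a (ν + Finsupp.single i 1) = hdeg N a ν := by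
            rw [hdeg_add_single, if_neg hnot, add_zero]
          have hcz : coeff (ν + Finsupp.single i 1) P = 0 := by
            by_contra hne
            have := minLe _ (MvPolynomial.mem_support_iff.mpr hne)
            rw [hdeq] at this
            omega
          rw [hcz, mul_zero]
        have hsplit := Finset.sum_filter_add_sum_filter_not Finset.univ
          (fun i : Fin N => i.val < a)
          (fun i => ((ν i : ℂ) + 1) * coeff (ν + Finsupp.single i 1) P)
        rw [Finset.sum_eq_zero hz, add_zero] at hsplit
        show (∑ i ∈ Finset.univ.filter (fun i : Fin N => i.val < a),
          ((ν i : ℂ) + 1) * coeff (ν + Finsupp.single i 1) P) = 0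
        rw [hsplit, coeffE ν]
      · rw [Finset.sum_congr rfl (fun i hi => by
          rw [coeff_PS, hdeg_add_single, if_pos hi, if_neg hc, mul_zero])]
        exact Finset.sum_const_zero
    have hQPS : Qcoeff N a P S = MvPolynomial.aeval (vmap N a) PS := by
      rw [Qform N a P hTI S, hPS, map_sum]
      apply Finset.sum_congr rfl
      intro mo _
      rw [aeval_monomial, Finsupp.prod_fintype _ _ (fun i => pow_zero _)]
      rfl
    have hQne : Qcoeff N a P S ≠ 0 := by
      rw [hQPS]
      exact Phi_ne_zero N a (le_of_lt haN) PS hPSne hEhPS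
    have hRne : R ≠ 0 := by
      intro h0
      apply hQne
      rw [hfac, h0, zero_mul]
    have hdvdQ : (X (Sum.inr none) - X (Sum.inr (some ⟨a, haN⟩)) :
        MvPolynomial (FVars N) ℂ) ^ (D + 1) ∣ Qcoeff N a P S := by
      rw [Qform N a P hTI S]
      apply Finset.dvd_sum
      intro mo hmo
      apply Dvd.dvd.mul_left
      have hmo' := Finset.mem_filter.mp hmo
      have hminmem : minDeg N P (a + 1) ≤ hdeg N (a + 1) mo := by
        rw [hminDeg_eq (a + 1)]
        exact Nat.sInf_le ⟨mo, hmo'.1, rfl⟩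
      have hge : D + 1 ≤ mo ⟨a, haN⟩ := by
        by_contra hlt
        apply hcon
        calc minDeg N P (a + 1) ≤ hdeg N (a + 1) mo := hminmem
          _ ≤ D + S := by
            rw [hdeg_succ N a haN mo, hmo'.2]
            omega
      have h1 : vmap N a ⟨a, haN⟩ ^ mo ⟨a, haN⟩ ∣ gm N a mo :=
        Finset.dvd_prod_of_mem (fun i => vmap N a i ^ mo i) (Finset.mem_univ _)
      refine dvd_trans ?_ h1
      have hv : vmap N a ⟨a, haN⟩
          = -(X (Sum.inr none) - X (Sum.inr (some ⟨a, haN⟩)) : MvPolynomial (FVars N) ℂ) := by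
        simp only [vmap, lt_irrefl, if_false]
        ring
      rw [hv, neg_pow]
      exact Dvd.dvd.mul_left (pow_dvd_pow _ hge) _
    exact order_le N a haN R Pder (Qcoeff N a P S) hR hRne hfac D hD.2 hdvdQ
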